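/- Lower bound via cluster contraction: the optimal CluVRP value is at least the optimal value of the CVRP instance obtained by contracting each cluster to a single node whose demand is the sum of demands in the cluster, with inter-node costs defined as the minimum edge cost between the corresponding clusters, plus the sum over clusters of the minimum Hamiltonian path cost min_{u≠v in V_k} ĉ_{uv}. -/

import Mathlib

open scoped ENNReal

/-- Cost of a walk given as a list of vertices. -/
noncomputable def pathCostE {α : Type*} (c : α → α → ℝ≥0∞) : List α → ℝ≥0∞
  | a :: b :: t => c a b + pathCostE c (b :: t)
  | _ => 0

/-- Cost of a closed route based at the depot (`none`). -/
noncomputable def routeCostE {α : Type*} (c : Option α → Option α → ℝ≥0∞) (r : List α) : ℝ≥0∞ :=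
  pathCostE c ((none :: r.map some) ++ [none])

/-- CluVRP feasibility: every customer visited exactly once, routes without
repetition, capacity `Q` respected, each cluster served contiguously by one
vehicle. -/
def CluVRPFeasible {C : Type*} {N m : ℕ} (Q : ℝ) (q : C → ℝ) (clu : C → Fin N)
    (routes : Fin m → List C) : Prop :=
  (∀ v : C, ∃! i : Fin m, v ∈ routes i) ∧
  (∀ i, (routes i).Nodup) ∧
  (∀ i, ((routes i).map q).sum ≤ Q) ∧
  (∀ k : Fin N, ∃ (i : Fin m) (l₁ l₂ l₃ : List C),
    routes i = l₁ ++ l₂ ++ l₃ ∧ ∀ v, v ∈ l₂ ↔ clu v = k)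

/-- CVRP feasibility (for the contracted instance on cluster nodes). -/
def CVRPFeasible {C : Type*} {m : ℕ} (Q : ℝ) (q : C → ℝ) (routes : Fin m → List C) : Prop :=
  (∀ v : C, ∃! i : Fin m, v ∈ routes i) ∧
  (∀ i, (routes i).Nodup) ∧
  (∀ i, ((routes i).map q).sum ≤ Q)

/-- Cost function of the contracted instance: the cost between two cluster
nodes (or the depot and a cluster node) is the minimum edge cost between the
corresponding vertex sets. -/
noncomputable def contractedCost {C : Type*} {N : ℕ} (clu : C → Fin N)
    (c : Option C → Option C → ℝ≥0∞) : Option (Fin N) → Option (Fin N) → ℝ≥0∞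
  | some k, some l => ⨅ u ∈ {v : C | clu v = k}, ⨅ w ∈ {v : C | clu v = l}, c (some u) (some w)
  | none, some l => ⨅ w ∈ {v : C | clu v = l}, c none (some w)
  | some k, none => ⨅ u ∈ {v : C | clu v = k}, c (some u) none
  | none, none => 0

/-- Minimum cost of a Hamiltonian path through cluster `k` (with free endpoints),
i.e. `min_{u ≠ v ∈ V_k} ĉ_{uv}`. -/
noncomputable def minClusterHamPath {C : Type*} {N : ℕ} (clu : C → Fin N)
    (c : Option C → Option C → ℝ≥0∞) (k : Fin N) : ℝ≥0∞ :=
  sInf {x | ∃ l : List C, l.Nodup ∧ (∀ v : C, v ∈ l ↔ clu v = k) ∧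
    x = pathCostE (fun a b => c (some a) (some b)) l}

lemma pathCostE_cons_cons {α : Type*} (c : α → α → ℝ≥0∞) (a b : α) (l : List α) :
    pathCostE c (a :: b :: l) = c a b + pathCostE c (b :: l) := rfl

lemma pathCostE_append {α : Type*} (c : α → α → ℝ≥0∞) (a : α) :
    ∀ l₁ l₂ : List α, pathCostE c (l₁ ++ a :: l₂) = pathCostE c (l₁ ++ [a]) + pathCostE c (a :: l₂)
  | [], l₂ => by simp [pathCostE]
  | [x], l₂ => by simp [pathCostE, pathCostE_cons_cons]
  | x :: y :: l₁, l₂ => by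
      have ih := pathCostE_append c a (y :: l₁) l₂
      simp only [List.cons_append] at ih ⊢
      rw [pathCostE_cons_cons, pathCostE_cons_cons, ih, add_assoc]

lemma pathCostE_append_getLast {α : Type*} (c : α → α → ℝ≥0∞) (u w : List α) (hu : u ≠ []) :
    pathCostE c (u ++ w) = pathCostE c u + pathCostE c (u.getLast hu :: w) := by
  conv_lhs => rw [← List.dropLast_append_getLast hu, List.append_assoc, List.singleton_append]
  rw [pathCostE_append]
  congr 1
  rw [List.dropLast_append_getLast hu]

lemma pathCostE_map {α β : Type*} (f : α → β) (c : β → β → ℝ≥0∞) :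
    ∀ l : List α, pathCostE c (l.map f) = pathCostE (fun a b => c (f a) (f b)) l
  | [] => rfl
  | [a] => rfl
  | a :: b :: l => by
      simp only [List.map_cons, pathCostE_cons_cons]
      rw [← List.map_cons (f := f) (a := b) (l := l), pathCostE_map f c (b :: l)]

lemma contracted_le {C : Type*} {N : ℕ} (clu : C → Fin N)
    (c : Option C → Option C → ℝ≥0∞) (x : Option C) (h : C) :
    contractedCost clu c (x.map clu) (some (clu h)) ≤ c x (some h) := by
  cases x with
  | none =>
      show (⨅ w ∈ {v : C | clu v = clu h}, c none (some w)) ≤ c none (some h)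
      exact biInf_le _ rfl
  | some u =>
      show (⨅ u' ∈ {v : C | clu v = clu u}, ⨅ w ∈ {v : C | clu v = clu h}, c (some u') (some w))
        ≤ c (some u) (some h)
      exact le_trans (biInf_le _ rfl) (biInf_le _ rfl)

lemma contracted_le_none {C : Type*} {N : ℕ} (clu : C → Fin N)
    (c : Option C → Option C → ℝ≥0∞) (x : Option C) :
    contractedCost clu c (x.map clu) none ≤ c x none := by
  cases x with
  | none =>
      show (0 : ℝ≥0∞) ≤ c none none
      exact zero_le
  | some u =>
      show (⨅ u' ∈ {v : C | clu v = clu u}, c (some u') none) ≤ c (some u) none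
      exact biInf_le _ rfl

lemma pathCostE_pair {α : Type*} (c : α → α → ℝ≥0∞) (a b : α) :
    pathCostE c [a, b] = c a b := by simp [pathCostE]

lemma cost_ge {C : Type*} {N : ℕ} (clu : C → Fin N) (c : Option C → Option C → ℝ≥0∞) :
    ∀ bs : List (Fin N × List C),
      (∀ p ∈ bs, p.2 ≠ [] ∧ ∀ w ∈ p.2, clu w = p.1) →
      ∀ x : Option C,
      pathCostE (contractedCost clu c) (x.map clu :: bs.map (some ∘ Prod.fst) ++ [none])
        + (bs.map (fun p => pathCostE (fun a b => c (some a) (some b)) p.2)).sum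
      ≤ pathCostE c (x :: (bs.map Prod.snd).flatten.map some ++ [none]) := by
  intro bs
  induction bs with
  | nil =>
      intro _ x
      simp only [List.map_nil, List.flatten_nil, List.nil_append, List.sum_nil, add_zero,
        List.cons_append]
      rw [pathCostE_pair, pathCostE_pair]
      exact contracted_le_none clu c x
  | cons p bs' ih =>
      obtain ⟨k, b⟩ := p
      intro hp x
      obtain ⟨hb, hin⟩ := hp (k, b) (List.mem_cons_self)
      simp only at hb hin
      have hbm : b.map some ≠ [] := by simpa using hb
      set t := b.getLast hb with hT
      have ht : t ∈ b := List.getLast_mem hb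
      have hclut : clu t = k := hin t ht
      obtain ⟨h, b', rfl⟩ : ∃ h b', b = h :: b' := by
        cases b with
        | nil => exact absurd rfl hb
        | cons h b' => exact ⟨h, b', rfl⟩
      have hcluh : clu h = k := hin h (List.mem_cons_self)
      set J := (bs'.map Prod.snd).flatten with hJ
      have hsub : ∀ p ∈ bs', p.2 ≠ [] ∧ ∀ w ∈ p.2, clu w = p.1 :=
        fun p hp' => hp p (List.mem_cons_of_mem _ hp')
      have IH := ih hsub (some t)
      -- rewrite RHS
      have hrhs : pathCostE c (x :: (((k, (h :: b')) :: bs').map Prod.snd).flatten.map some ++ [none])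
          = (c x (some h) + pathCostE (fun a b => c (some a) (some b)) (h :: b'))
            + pathCostE c (some t :: (J.map some ++ [none])) := by
        have e0 : (x :: (((k, (h :: b')) :: bs').map Prod.snd).flatten.map some ++ [none])
            = (x :: (h :: b').map some) ++ (J.map some ++ [none]) := by
          simp [hJ, List.append_assoc]
        rw [e0]
        have hgl : (x :: (h :: b').map some).getLast (List.cons_ne_nil _ _)
            = some t := by
          rw [List.getLast_cons hbm, List.getLast_map]
        rw [pathCostE_append_getLast c _ _ (List.cons_ne_nil _ _), hgl]
        congr 1
        rw [show (x :: (h :: b').map some) = x :: some h :: b'.map some by simp,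
          pathCostE_cons_cons, ← List.map_cons (f := some) (a := h) (l := b'), pathCostE_map]
      rw [hrhs]
      -- rewrite LHS head
      have hlhs : pathCostE (contractedCost clu c)
            (x.map clu :: ((k, (h :: b')) :: bs').map (some ∘ Prod.fst) ++ [none])
          = contractedCost clu c (x.map clu) (some k)
            + pathCostE (contractedCost clu c) (some k :: bs'.map (some ∘ Prod.fst) ++ [none]) := by
        simp only [List.map_cons, Function.comp, List.cons_append]
        rw [pathCostE_cons_cons]
      rw [hlhs]
      simp only [List.map_cons, List.sum_cons]
      have harith : contractedCost clu c (x.map clu) (some k)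
            + pathCostE (contractedCost clu c) (some k :: bs'.map (some ∘ Prod.fst) ++ [none])
            + (pathCostE (fun a b => c (some a) (some b)) (h :: b')
              + (bs'.map (fun p => pathCostE (fun a b => c (some a) (some b)) p.2)).sum)
          = (contractedCost clu c (x.map clu) (some k)
              + pathCostE (fun a b => c (some a) (some b)) (h :: b'))
            + (pathCostE (contractedCost clu c) (some k :: bs'.map (some ∘ Prod.fst) ++ [none])
              + (bs'.map (fun p => pathCostE (fun a b => c (some a) (some b)) p.2)).sum) := by
        ring
      rw [harith]
      refine add_le_add (add_le_add ?_ le_rfl) ?_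
      · rw [← hcluh]
        exact contracted_le clu c x h
      · -- use IH
        have : ((some t : Option C).map clu) = some k := by simp [hclut]
        rw [this] at IH
        exact IH

lemma decomp {C : Type*} {N : ℕ} (clu : C → Fin N) :
    ∀ (n : ℕ) (r : List C), r.length ≤ n → r.Nodup →
      (∀ v ∈ r, ∃ l₁ l₂ l₃ : List C, r = l₁ ++ l₂ ++ l₃ ∧ ∀ w, w ∈ l₂ ↔ clu w = clu v) →
      ∃ bs : List (Fin N × List C), r = (bs.map Prod.snd).flatten ∧
        ∀ p ∈ bs, p.2 ≠ [] ∧ ∀ w, w ∈ p.2 ↔ clu w = p.1 := by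
  intro n
  induction n with
  | zero =>
      intro r hlen _ _
      have : r = [] := List.eq_nil_of_length_eq_zero (Nat.le_zero.mp hlen)
      exact ⟨[], by simp [this], by simp⟩
  | succ n ih =>
      intro r hlen hnd H
      cases r with
      | nil => exact ⟨[], by simp, by simp⟩
      | cons v r' =>
        obtain ⟨l₁, l₂, l₃, hr, hiff⟩ := H v (List.mem_cons_self)
        have hvl₂ : v ∈ l₂ := (hiff v).mpr rfl
        have hl₁ : l₁ = [] := by
          cases l₁ with
          | nil => rfl
          | cons a t =>
            exfalso
            have hav : a = v := by
              have h2 := congrArg List.head? hr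
              simp only [List.head?_cons, List.cons_append, List.append_assoc] at h2
              exact (Option.some_injective _ h2).symm
            rw [hr, List.append_assoc] at hnd
            have hdisj := List.disjoint_of_nodup_append hnd
            exact hdisj (by simp [hav]) (List.mem_append_left _ hvl₂)
        subst hl₁
        simp only [List.nil_append] at hr
        have hndr : (l₂ ++ l₃).Nodup := hr ▸ hnd
        have hdisj23 := List.disjoint_of_nodup_append hndr
        have hlen3 : l₃.length ≤ n := by
          have h0 : 1 ≤ l₂.length := List.length_pos_iff.mpr (fun h => by simp [h] at hvl₂)
          have h1 := congrArg List.length hr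
          simp only [List.length_cons, List.length_append] at h1
          have h2 : r'.length + 1 ≤ n + 1 := by simpa using hlen
          omega
        have hnd3 : l₃.Nodup := (List.nodup_append.mp hndr).2.1
        have H3 : ∀ w ∈ l₃, ∃ m₁ m₂ m₃ : List C, l₃ = m₁ ++ m₂ ++ m₃ ∧
            ∀ u, u ∈ m₂ ↔ clu u = clu w := by
          intro w hw
          obtain ⟨m₁, m₂, m₃, hrm, hiffm⟩ := H w (by rw [hr]; exact List.mem_append_right _ hw)
          have hwm₂ : w ∈ m₂ := (hiffm w).mpr rfl
          have hkne : clu w ≠ clu v := by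
            intro hh
            exact hdisj23 ((hiff w).mpr hh) hw
          have hm₂l₂ : ∀ u ∈ m₂, u ∉ l₂ := by
            intro u hu hul₂
            exact hkne (by rw [← (hiffm u).mp hu, (hiff u).mp hul₂])
          have e1 : l₂ ++ l₃ = m₁ ++ (m₂ ++ m₃) := by rw [← hr, hrm, List.append_assoc]
          have hlen2 : l₂.length ≤ m₁.length := by
            by_contra hcon
            push_neg at hcon
            have e2 : List.drop m₁.length l₂ ++ l₃ = m₂ ++ m₃ := by
              have h5 := congrArg (List.drop m₁.length) e1
              rwa [List.drop_append_of_le_length (le_of_lt hcon), List.drop_left] at h5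
            obtain ⟨u, lu, hu⟩ : ∃ u lu, List.drop m₁.length l₂ = u :: lu := by
              cases hdrop : List.drop m₁.length l₂ with
              | nil =>
                exfalso
                have := congrArg List.length hdrop
                simp only [List.length_drop, List.length_nil] at this
                omega
              | cons u lu => exact ⟨u, lu, rfl⟩
            have hul₂ : u ∈ l₂ := List.mem_of_mem_drop (show u ∈ List.drop m₁.length l₂ from hu ▸ List.mem_cons_self)
            cases m₂ with
            | nil => simp at hwm₂
            | cons u' mu =>
              have huu : u = u' := by
                rw [hu] at e2
                simpa using congrArg List.head? e2
              exact hm₂l₂ u' (List.mem_cons_self) (huu ▸ hul₂)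
          have e3 : l₃ = (List.drop l₂.length m₁) ++ m₂ ++ m₃ := by
            have h6 := congrArg (List.drop l₂.length) e1
            rw [List.drop_left, List.drop_append_of_le_length hlen2] at h6
            rw [h6, List.append_assoc]
          exact ⟨_, m₂, m₃, e3, hiffm⟩
        obtain ⟨bs', hjoin', hprop'⟩ := ih l₃ hlen3 hnd3 H3
        refine ⟨(clu v, l₂) :: bs', ?_, ?_⟩
        · simp only [List.map_cons, List.flatten_cons]
          rw [show (List.map Prod.snd bs').flatten = l₃ from hjoin'.symm]
          exact hr
        · intro p hp
          rcases List.mem_cons.mp hp with hh | hh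
          · subst hh
            refine ⟨?_, hiff⟩
            intro hh2
            have : v ∈ ([] : List C) := hh2 ▸ hvl₂
            simp at this
          · exact hprop' p hh


/-- Lower bound via cluster contraction: the optimal CluVRP value is at least
the optimal value of the contracted CVRP instance (cluster nodes, summed
demands, minimum inter-cluster edge costs) plus the sum over clusters of the
minimum intra-cluster Hamiltonian path cost. -/
theorem cluvrp_contraction_lower_bound {C : Type*} [Fintype C] [DecidableEq C]
    {N m : ℕ} (Q : ℝ) (q : C → ℝ) (hq : ∀ v, 0 ≤ q v)
    (clu : C → Fin N) (hsurj : Function.Surjective clu)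
    (c : Option C → Option C → ℝ≥0∞) :
    sInf {x | ∃ routes : Fin m → List C, CluVRPFeasible Q q clu routes ∧
        x = ∑ i, routeCostE c (routes i)} ≥
      sInf {x | ∃ routes' : Fin m → List (Fin N),
          CVRPFeasible Q (fun k => ∑ v ∈ Finset.univ.filter (fun v => clu v = k), q v) routes' ∧
          x = ∑ i, routeCostE (contractedCost clu c) (routes' i)} +
        ∑ k : Fin N, minClusterHamPath clu c k := by
  rw [ge_iff_le]
  refine le_sInf ?_
  rintro x ⟨routes, ⟨h1, h2, h3, h4⟩, rfl⟩
  have hdec : ∀ i, ∃ bs : List (Fin N × List C), routes i = (bs.map Prod.snd).flatten ∧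
      ∀ p ∈ bs, p.2 ≠ [] ∧ ∀ w, w ∈ p.2 ↔ clu w = p.1 := by
    intro i
    apply decomp clu (routes i).length (routes i) le_rfl (h2 i)
    intro v hv
    obtain ⟨j, l₁, l₂, l₃, hj, hiff⟩ := h4 (clu v)
    have hvj : v ∈ routes j := by
      rw [hj]
      exact List.mem_append_left _ (List.mem_append_right _ ((hiff v).mpr rfl))
    have hji : j = i := (h1 v).unique hvj hv
    subst hji
    exact ⟨l₁, l₂, l₃, hj, hiff⟩
  choose bs hjoin hblocks using hdec
  have hne : ∀ i, ∀ p ∈ bs i, p.2 ≠ [] := fun i p hp => (hblocks i p hp).1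
  have hfull : ∀ i, ∀ p ∈ bs i, ∀ w, w ∈ p.2 ↔ clu w = p.1 :=
    fun i p hp => (hblocks i p hp).2
  set s : Fin m → List (Fin N) := fun i => (bs i).map Prod.fst with hs
  set minH : Fin N → ℝ≥0∞ := minClusterHamPath clu c with hminH
  set chat : C → C → ℝ≥0∞ := fun a b => c (some a) (some b) with hchat
  -- nodup of joins
  have hjn : ∀ i, (∀ b ∈ (bs i).map Prod.snd, b.Nodup) ∧
      ((bs i).map Prod.snd).Pairwise List.Disjoint := by
    intro i
    have := h2 i
    rw [hjoin i, List.nodup_flatten] at this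
    exact this
  have hndb : ∀ i, ∀ p ∈ bs i, p.2.Nodup := by
    intro i p hp
    exact (hjn i).1 p.2 (List.mem_map_of_mem (f := Prod.snd) hp)
  -- s i nodup
  have hnds : ∀ i, (s i).Nodup := by
    intro i
    have hpw : ((bs i).map Prod.snd).Pairwise List.Disjoint := (hjn i).2
    rw [List.pairwise_map] at hpw
    show ((bs i).map Prod.fst).Pairwise (· ≠ ·)
    rw [List.pairwise_map]
    refine hpw.imp_of_mem ?_
    intro p1 p2 hp1 hp2 hdisj heq
    obtain ⟨w, hw⟩ := List.exists_mem_of_ne_nil _ (hne i p1 hp1)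
    exact hdisj hw ((hfull i p2 hp2 w).mpr (((hfull i p1 hp1 w).mp hw).trans heq))
  -- membership transfer
  have hroute : ∀ i k, k ∈ s i → ∀ v, clu v = k → v ∈ routes i := by
    intro i k hk v hv
    obtain ⟨p, hp, hkp⟩ := List.mem_map.mp hk
    have : v ∈ p.2 := (hfull i p hp v).mpr (by rw [hv, hkp])
    rw [hjoin i]
    exact List.mem_flatten.mpr ⟨p.2, List.mem_map_of_mem (f := Prod.snd) hp, this⟩
  have hexu : ∀ k, ∃! i, k ∈ s i := by
    intro k
    obtain ⟨v, hv⟩ := hsurj k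
    obtain ⟨i, hvi, huniq⟩ := h1 v
    have hki : k ∈ s i := by
      have hvi' := hvi
      rw [hjoin i] at hvi'
      obtain ⟨b, hb, hvb⟩ := List.mem_flatten.mp hvi'
      obtain ⟨p, hp, rfl⟩ := List.mem_map.mp hb
      have : clu v = p.1 := (hfull i p hp v).mp hvb
      exact List.mem_map.mpr ⟨p, hp, by rw [← hv, this]⟩
    refine ⟨i, hki, ?_⟩
    intro j hkj
    exact huniq j (hroute j k hkj v hv)
  -- per-block demand
  have hdem : ∀ i, ∀ p ∈ bs i, (p.2.map q).sum
      = ∑ v ∈ Finset.univ.filter (fun v => clu v = p.1), q v := by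
    intro i p hp
    rw [← List.sum_toFinset _ (hndb i p hp)]
    apply Finset.sum_congr ?_ (fun _ _ => rfl)
    ext w
    simp only [List.mem_toFinset, Finset.mem_filter, Finset.mem_univ, true_and]
    exact hfull i p hp w
  -- capacity
  have hcap : ∀ i, ((s i).map (fun k => ∑ v ∈ Finset.univ.filter (fun v => clu v = k), q v)).sum ≤ Q := by
    intro i
    have e1 : (s i).map (fun k => ∑ v ∈ Finset.univ.filter (fun v => clu v = k), q v)
        = (bs i).map (fun p => (p.2.map q).sum) := by
      rw [hs]
      simp only [List.map_map]
      exact List.map_congr_left (fun p hp => ((hdem i p hp)).symm)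
    rw [e1]
    have e2 : ((bs i).map (fun p => (p.2.map q).sum)).sum = ((routes i).map q).sum := by
      rw [hjoin i, List.map_flatten, List.sum_flatten, List.map_map, List.map_map]
      rfl
    rw [e2]
    exact h3 i
  -- cost per route
  have hcost : ∀ i, routeCostE (contractedCost clu c) (s i)
      + ((bs i).map (fun p => pathCostE chat p.2)).sum ≤ routeCostE c (routes i) := by
    intro i
    have := cost_ge clu c (bs i) (fun p hp => ⟨hne i p hp, fun w hw => (hfull i p hp w).mp hw⟩) none
    unfold routeCostE
    rw [hjoin i]
    simpa [hs, List.map_map] using this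
  -- Hamiltonian path bound
  have hham : ∀ i, ((s i).map minH).sum ≤ ((bs i).map (fun p => pathCostE chat p.2)).sum := by
    intro i
    rw [hs]
    simp only [List.map_map]
    apply List.sum_le_sum
    intro p hp
    apply sInf_le
    exact ⟨p.2, hndb i p hp, hfull i p hp, rfl⟩
  -- partition sum
  have hdisjF : ((Finset.univ : Finset (Fin m)) : Set (Fin m)).PairwiseDisjoint
      (fun i => (s i).toFinset) := by
    intro i _ j _ hij
    simp only [Function.onFun]
    rw [Finset.disjoint_left]
    intro k hki hkj
    rw [List.mem_toFinset] at hki hkj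
    exact hij ((hexu k).unique hki hkj)
  have hbu : (Finset.univ : Finset (Fin m)).biUnion (fun i => (s i).toFinset)
      = (Finset.univ : Finset (Fin N)) := by
    ext k
    simp only [Finset.mem_biUnion, Finset.mem_univ, true_and, List.mem_toFinset, iff_true]
    exact (hexu k).exists
  have hpart : ∑ k : Fin N, minH k = ∑ i, ((s i).map minH).sum := by
    rw [← hbu, Finset.sum_biUnion hdisjF]
    exact Finset.sum_congr rfl (fun i _ => (List.sum_toFinset _ (hnds i)))
  -- conclude
  have hfeas : CVRPFeasible Q (fun k => ∑ v ∈ Finset.univ.filter (fun v => clu v = k), q v) s :=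
    ⟨hexu, hnds, hcap⟩
  calc sInf {x | ∃ routes' : Fin m → List (Fin N),
          CVRPFeasible Q (fun k => ∑ v ∈ Finset.univ.filter (fun v => clu v = k), q v) routes' ∧
          x = ∑ i, routeCostE (contractedCost clu c) (routes' i)} + ∑ k : Fin N, minH k
      ≤ (∑ i, routeCostE (contractedCost clu c) (s i)) + ∑ i, ((s i).map minH).sum := by
        refine add_le_add (sInf_le ⟨s, hfeas, rfl⟩) ?_
        rw [hpart]
    _ ≤ (∑ i, routeCostE (contractedCost clu c) (s i))
        + ∑ i, ((bs i).map (fun p => pathCostE chat p.2)).sum :=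
        add_le_add le_rfl (Finset.sum_le_sum (fun i _ => hham i))
    _ = ∑ i, (routeCostE (contractedCost clu c) (s i)
        + ((bs i).map (fun p => pathCostE chat p.2)).sum) := by
        rw [Finset.sum_add_distrib]
    _ ≤ ∑ i, routeCostE c (routes i) := Finset.sum_le_sum (fun i _ => hcost i)
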